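/- For every matrix A ∈ C_n, every pair B, C ∈ P_n, and every additive map ζ : H_n → F·e_{1,n}, the map f(X) = {X, A} + X^τ B + C X^τ + ζ(X) maps H_n into H_n and is a commuting map: [f(X), X] = 0 for all X ∈ H_n. -/

import Mathlib

open Matrix

/-- `X` belongs to the Heisenberg algebra `H_n`: its only possibly nonzero entries lie
in the first row strictly above the diagonal or the last column strictly above the diagonal
(0-based indices: row 0 with column ≠ 0, or column `n-1` with row ≠ `n-1`). -/
def IsHeis {n : ℕ} {F : Type*} [Field F] (X : Matrix (Fin n) (Fin n) F) : Prop :=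
  ∀ i j : Fin n, ¬ ((i.val = 0 ∧ j.val ≠ 0) ∨ (j.val = n - 1 ∧ i.val ≠ n - 1)) → X i j = 0

/-- Anti-transpose: `(antiT X) i j = X (rev j) (rev i)`. -/
def antiT {n : ℕ} {F : Type*} [Field F] (X : Matrix (Fin n) (Fin n) F) :
    Matrix (Fin n) (Fin n) F :=
  Matrix.of fun i j => X j.rev i.rev

/-- `A ∈ C_n`: first and last rows and columns of `A` are zero. -/
def IsC {n : ℕ} {F : Type*} [Field F] (A : Matrix (Fin n) (Fin n) F) : Prop :=
  ∀ i j : Fin n, (i.val = 0 ∨ i.val = n - 1 ∨ j.val = 0 ∨ j.val = n - 1) → A i j = 0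

/-- `A ∈ P_n`: hollow skew-persymmetric matrices in `C_n`. -/
def IsP {n : ℕ} {F : Type*} [Field F] (A : Matrix (Fin n) (Fin n) F) : Prop :=
  IsC A ∧ (∀ i j : Fin n, antiT A i j = - A i j) ∧ (∀ i : Fin n, A i i.rev = 0)

section Aux

variable {n : ℕ} {F : Type*} [Field F]

lemma heis_add {X Y : Matrix (Fin n) (Fin n) F} (hX : IsHeis X) (hY : IsHeis Y) :
    IsHeis (X + Y) := fun i j h => by
  simp [Matrix.add_apply, hX i j h, hY i j h]

lemma heis_antiT {X : Matrix (Fin n) (Fin n) F} (hX : IsHeis X) : IsHeis (antiT X) := by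
  intro i j h
  have hi := i.isLt; have hj := j.isLt
  apply hX
  simp only [Fin.val_rev]
  omega

lemma heis_mul_isC {X A : Matrix (Fin n) (Fin n) F} (hX : IsHeis X) (hA : IsC A) :
    IsHeis (X * A) := by
  intro i j h
  rw [Matrix.mul_apply]
  apply Finset.sum_eq_zero
  intro k _
  by_cases hik : (i.val = 0 ∧ k.val ≠ 0) ∨ (k.val = n - 1 ∧ i.val ≠ n - 1)
  · rw [hA k j (by omega), mul_zero]
  · rw [hX i k hik, zero_mul]

lemma isC_mul_heis {A X : Matrix (Fin n) (Fin n) F} (hA : IsC A) (hX : IsHeis X) :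
    IsHeis (A * X) := by
  intro i j h
  rw [Matrix.mul_apply]
  apply Finset.sum_eq_zero
  intro k _
  by_cases hkj : (k.val = 0 ∧ j.val ≠ 0) ∨ (j.val = n - 1 ∧ k.val ≠ n - 1)
  · rw [hA i k (by omega), zero_mul]
  · rw [hX k j hkj, mul_zero]

lemma heis_mul_entry (hn : 3 ≤ n) {Y X : Matrix (Fin n) (Fin n) F}
    (hY : IsHeis Y) (hX : IsHeis X) {i j : Fin n} (h : ¬ (i.val = 0 ∧ j.val = n - 1)) :
    (Y * X) i j = 0 := by
  rw [Matrix.mul_apply]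
  apply Finset.sum_eq_zero
  intro k _
  by_cases hik : (i.val = 0 ∧ k.val ≠ 0) ∨ (k.val = n - 1 ∧ i.val ≠ n - 1)
  · by_cases hkj : (k.val = 0 ∧ j.val ≠ 0) ∨ (j.val = n - 1 ∧ k.val ≠ n - 1)
    · omega
    · rw [hX k j hkj, mul_zero]
  · rw [hY i k hik, zero_mul]

lemma skew_sum [CharZero F] (S : Fin n → Fin n → F) (hS : ∀ m k, S m k = - S k m)
    (v : Fin n → F) : ∑ k, ∑ m, v m * S m k * v k = 0 := by
  have h1 : (∑ k, ∑ m, v m * S m k * v k) = -(∑ k, ∑ m, v m * S m k * v k) := by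
    calc (∑ k, ∑ m, v m * S m k * v k) = ∑ m, ∑ k, v m * S m k * v k := Finset.sum_comm
    _ = ∑ m, ∑ k, -(v k * S k m * v m) := by
        refine Finset.sum_congr rfl fun m _ => Finset.sum_congr rfl fun k _ => ?_
        rw [hS]; ring
    _ = -(∑ k, ∑ m, v m * S m k * v k) := by simp only [Finset.sum_neg_distrib]
  have h2 : (2 : F) * (∑ k, ∑ m, v m * S m k * v k) = 0 := by linear_combination h1
  rcases mul_eq_zero.mp h2 with h | h
  · exact absurd h two_ne_zero
  · exact h

lemma sum_rev {M : Type*} [AddCommMonoid M] (h : Fin n → M) :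
    ∑ m : Fin n, h m.rev = ∑ m, h m := by
  simpa using Equiv.sum_comp (Fin.revPerm (n := n)) h

end Aux

theorem stmt14 {n : ℕ} (hn : 3 ≤ n) {F : Type*} [Field F] [CharZero F]
    (A B C : Matrix (Fin n) (Fin n) F)
    (hA : IsC A) (hB : IsP B) (hC : IsP C)
    (ζ : Matrix (Fin n) (Fin n) F → Matrix (Fin n) (Fin n) F)
    (hζadd : ∀ X Y, IsHeis X → IsHeis Y → ζ (X + Y) = ζ X + ζ Y)
    (hζcen : ∀ X, IsHeis X →
      ∃ a : F, ζ X = a • Matrix.single ⟨0, by omega⟩ ⟨n - 1, by omega⟩ (1 : F))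
    (f : Matrix (Fin n) (Fin n) F → Matrix (Fin n) (Fin n) F)
    (hf : ∀ X, f X = (X * A + A * X) + antiT X * B + C * antiT X + ζ X) :
    ∀ X, IsHeis X → IsHeis (f X) ∧ f X * X = X * f X := by
  set z : Fin n := ⟨0, by omega⟩ with hz
  set l : Fin n := ⟨n - 1, by omega⟩ with hl
  have hzrev : (z : Fin n).rev = l := by
    apply Fin.ext; rw [Fin.val_rev]
  have hlrev : (l : Fin n).rev = z := by
    apply Fin.ext; rw [Fin.val_rev]; simp only [hz, hl, Fin.val_mk]; omega
  intro X hX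
  obtain ⟨a, hζ⟩ := hζcen X hX
  have hζheis : IsHeis (ζ X) := by
    intro i j h
    rw [hζ]
    simp only [Matrix.smul_apply, Matrix.single, Matrix.of_apply, smul_eq_mul]
    rw [if_neg, mul_zero]
    rintro ⟨h1, h2⟩
    subst h1; subst h2
    apply h
    simp only [hz, hl, Fin.val_mk]
    exact Or.inl ⟨trivial, by omega⟩
  have hfheis : IsHeis (f X) := by
    rw [hf]
    exact heis_add (heis_add (heis_add (heis_add (heis_mul_isC hX hA)
      (isC_mul_heis hA hX)) (heis_mul_isC (heis_antiT hX) hB.1))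
      (isC_mul_heis hC.1 (heis_antiT hX))) hζheis
  refine ⟨hfheis, ?_⟩
  ext i j
  by_cases hij : i.val = 0 ∧ j.val = n - 1
  swap
  · rw [heis_mul_entry hn hfheis hX hij, heis_mul_entry hn hX hfheis hij]
  obtain rfl : i = z := Fin.ext hij.1
  obtain rfl : j = l := Fin.ext hij.2
  rw [Matrix.mul_apply, Matrix.mul_apply]
  -- zero entries facts
  have hXll : X l l = 0 := hX l l (by simp only [hz, hl, Fin.val_mk]; omega)
  have hXzz : X z z = 0 := hX z z (by simp only [hz, hl, Fin.val_mk]; omega)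
  have hAz : ∀ m, A z m = 0 := fun m => hA z m (Or.inl rfl)
  have hCz : ∀ m, C z m = 0 := fun m => hC.1 z m (Or.inl rfl)
  have hAl : ∀ m, A m l = 0 := fun m => hA m l (Or.inr (Or.inr (Or.inr rfl)))
  have hBl : ∀ m, B m l = 0 := fun m => hB.1 m l (Or.inr (Or.inr (Or.inr rfl)))
  -- expand f X on the first row
  have e1 : ∀ k, f X z k = (∑ m, X z m * A m k) + (∑ m, X m.rev l * B m k) + ζ X z k := by
    intro k
    rw [hf]
    simp only [Matrix.add_apply, Matrix.mul_apply, antiT, Matrix.of_apply, hzrev,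
      hAz, hCz, zero_mul, Finset.sum_const_zero, add_zero, zero_add]
  have e2 : ∀ k, f X k l = (∑ m, A k m * X m l) + (∑ m, C k m * X z m.rev) + ζ X k l := by
    intro k
    rw [hf]
    simp only [Matrix.add_apply, Matrix.mul_apply, antiT, Matrix.of_apply, hlrev,
      hAl, hBl, mul_zero, Finset.sum_const_zero, add_zero, zero_add]
  have hζL : ∀ k, ζ X z k * X k l = 0 := by
    intro k
    by_cases hk : k = l
    · subst hk; rw [hXll, mul_zero]
    · rw [hζ]
      simp only [Matrix.smul_apply, Matrix.single, Matrix.of_apply, smul_eq_mul]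
      rw [if_neg, mul_zero, zero_mul]
      rintro ⟨-, h2⟩; exact hk h2.symm
  have hζR : ∀ k, X z k * ζ X k l = 0 := by
    intro k
    by_cases hk : k = z
    · subst hk; rw [hXzz, zero_mul]
    · rw [hζ]
      simp only [Matrix.smul_apply, Matrix.single, Matrix.of_apply, smul_eq_mul]
      rw [if_neg, mul_zero, mul_zero]
      rintro ⟨h1, -⟩; exact hk h1.symm
  have hBskew : ∀ m k : Fin n, B m.rev k = - B k.rev m := by
    intro m k
    have h := hB.2.1 k.rev m
    simp only [antiT, Matrix.of_apply, Fin.rev_rev] at h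
    exact h
  have hCskew : ∀ m k : Fin n, C k m.rev = - C m k.rev := by
    intro m k
    have h := hC.2.1 m k.rev
    simp only [antiT, Matrix.of_apply, Fin.rev_rev] at h
    exact h
  calc ∑ k, f X z k * X k l
      = ∑ k, ((∑ m, X z m * A m k) * X k l + (∑ m, X m.rev l * B m k) * X k l) := by
        refine Finset.sum_congr rfl fun k _ => ?_
        rw [e1 k, add_mul, add_mul, hζL k, add_zero]
    _ = (∑ k, ∑ m, X z m * A m k * X k l) + (∑ k, ∑ m, X m l * B m.rev k * X k l) := by
        rw [Finset.sum_add_distrib]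
        congr 1
        · exact Finset.sum_congr rfl fun k _ => by rw [Finset.sum_mul]
        · refine Finset.sum_congr rfl fun k _ => ?_
          rw [Finset.sum_mul, ← sum_rev (fun m => X m l * B m.rev k * X k l)]
          refine Finset.sum_congr rfl fun m _ => ?_
          simp only [Fin.rev_rev]
    _ = (∑ k, ∑ m, X z m * A m k * X k l) + 0 := by
        congr 1
        exact skew_sum (fun m k => B m.rev k) hBskew (fun m => X m l)
    _ = ∑ k, ∑ m, X z k * A k m * X m l := by
        rw [add_zero]; exact Finset.sum_comm
    _ = (∑ k, ∑ m, X z k * (A k m * X m l)) + (∑ k, ∑ m, X z k * (C k m * X z m.rev)) := by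
        have hCsum : ∑ k, ∑ m, X z k * (C k m * X z m.rev) = 0 := by
          have step : ∀ k : Fin n, ∑ m, X z k * (C k m * X z m.rev)
              = ∑ m, X z m * C k m.rev * X z k := by
            intro k
            rw [← sum_rev (fun m => X z m * C k m.rev * X z k)]
            refine Finset.sum_congr rfl fun m _ => ?_
            simp only [Fin.rev_rev]
            ring
          rw [Finset.sum_congr rfl (fun k _ => step k)]
          exact skew_sum (fun m k => C k m.rev) hCskew (X z)
        rw [hCsum, add_zero]
        exact Finset.sum_congr rfl fun k _ => Finset.sum_congr rfl fun m _ => mul_assoc _ _ _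
    _ = ∑ k, X z k * f X k l := by
        rw [← Finset.sum_add_distrib]
        refine Finset.sum_congr rfl fun k _ => ?_
        rw [e2 k, mul_add, mul_add, hζR k, add_zero, Finset.mul_sum, Finset.mul_sum]
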